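/- Let X ⊆ Σ^ℤ be a subshift such that Γ₁⁺(x⁻) = Δ₁⁺(x⁻) for every x⁻ ∈ X⁻. Then there exists N ∈ ℕ such that Γ₁⁺(x⁻) ⊆ ω₁⁺((x_{-N},…,x_0)) for every x⁻ ∈ X⁻. -/

import Mathlib

open Set Filter Topology

/-! Basic symbolic dynamics notions.

* The alphabet is a nonempty finite type `A` with the discrete topology; `A^ℤ` and `A^ℕ`
  carry the product topology.
* A left-infinite sequence `x⁻ = (x_i)_{i ≤ 0}` is encoded as `u : ℕ → A` with `u n = x (-n)`.
* Finite words are lists, read left to right.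
-/

/-- The shift `S`. -/
def shiftMap {A : Type*} (x : ℤ → A) : ℤ → A := fun i => x (i + 1)

/-- A subshift: a nonempty closed shift-invariant subset of `A^ℤ`. -/
def IsSubshift {A : Type*} [TopologicalSpace A] (X : Set (ℤ → A)) : Prop :=
  X.Nonempty ∧ IsClosed X ∧ shiftMap '' X = X

/-- `X⁻`: the left-infinite rays of points of `X` (encoded via `u n = x (-n)`). -/
def Xminus {A : Type*} (X : Set (ℤ → A)) : Set (ℕ → A) :=
  {u | ∃ x ∈ X, ∀ n : ℕ, u n = x (-(n : ℤ))}

/-- The word `w` occurs in `x` (as a block of consecutive coordinates). -/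
def Occurs {A : Type*} (w : List A) (x : ℤ → A) : Prop :=
  ∃ i : ℤ, ∀ j : Fin w.length, x (i + ((j : ℕ) : ℤ)) = w.get j

/-- A finite word is admissible for `X` if it occurs in some point of `X`. -/
def Admissible {A : Type*} (X : Set (ℤ → A)) (w : List A) : Prop :=
  ∃ x ∈ X, Occurs w x

/-- The left ray `u` ends in the word `w`, i.e. `(x_{-k},…,x_0) = w` where `|w| = k+1`. -/
def EndsIn {A : Type*} (u : ℕ → A) (w : List A) : Prop :=
  ∀ j : Fin w.length, u (w.length - 1 - (j : ℕ)) = w.get j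

/-- `Γ₁⁺(x⁻)`: the letters that can follow the left ray `u` in `X`. -/
def Gamma1 {A : Type*} (X : Set (ℤ → A)) (u : ℕ → A) : Set A :=
  {σ | ∃ x ∈ X, (∀ n : ℕ, x (-(n : ℤ)) = u n) ∧ x 1 = σ}

/-- `x` carries the word `b` on the coordinate interval `[-(|b| - 1), 0]`. -/
def EndsAtZero {A : Type*} (x : ℤ → A) (b : List A) : Prop :=
  ∀ j : Fin b.length, x (((j : ℕ) : ℤ) - ((b.length : ℤ) - 1)) = b.get j

/-- `c ∈ ω⁺(b)`: every point of `X` carrying `b` ending at coordinate `0` can be modified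
on the positive coordinates so as to continue with the word `c`. -/
def OmegaWord {A : Type*} (X : Set (ℤ → A)) (b c : List A) : Prop :=
  ∀ x ∈ X, EndsAtZero x b →
    ∃ x' ∈ X, (∀ i : ℤ, i ≤ 0 → x' i = x i) ∧
      ∀ j : Fin c.length, x' (((j : ℕ) : ℤ) + 1) = c.get j

/-- `ω₁⁺(b)`. -/
def omega1 {A : Type*} (X : Set (ℤ → A)) (b : List A) : Set A :=
  {σ | OmegaWord X b [σ]}

/-- The word `(x_{-n},…,x_0)` read off the left ray `u`. -/
def lastWord {A : Type*} (u : ℕ → A) (n : ℕ) : List A :=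
  List.ofFn fun j : Fin (n + 1) => u (n - (j : ℕ))

/-- `Δ₁⁺(x⁻) = ⋃ₙ ω₁⁺((x_{-n},…,x_0))`. -/
def Delta1 {A : Type*} (X : Set (ℤ → A)) (u : ℕ → A) : Set A :=
  ⋃ n : ℕ, omega1 X (lastWord u n)

/-- Property g: `Δ₁⁺(x⁻) ≠ ∅` for every `x⁻ ∈ X⁻`. -/
def PropertyG {A : Type*} (X : Set (ℤ → A)) : Prop :=
  ∀ u ∈ Xminus X, (Delta1 X u).Nonempty

/-- A g-function for `X`, encoded as a total function `g : (ℕ → A) → A → ℝ`: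
continuity (of the restriction to the graph of `Γ₁⁺`, i.e. of the map on
`{(x⁻,σ) : σ ∈ Γ₁⁺(x⁻)}`), values in `[0,1]` there, and the normalization
`∑_{σ ∈ Γ₁⁺(x⁻)} g (x⁻, σ) = 1`. -/
def IsGFunction {A : Type*} [Fintype A] [TopologicalSpace A] (X : Set (ℤ → A))
    (g : (ℕ → A) → A → ℝ) : Prop :=
  ContinuousOn (fun p : (ℕ → A) × A => g p.1 p.2)
      {p : (ℕ → A) × A | p.1 ∈ Xminus X ∧ p.2 ∈ Gamma1 X p.1} ∧
  (∀ u ∈ Xminus X, ∀ σ ∈ Gamma1 X u, g u σ ∈ Set.Icc (0 : ℝ) 1) ∧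
  (∀ u ∈ Xminus X, ∑ σ : A, (Gamma1 X u).indicator (g u) σ = 1)

/-- Property (D): for every admissible word `b` and letter `σ` with `bσ` admissible there
is a word `a` with `ab` admissible and `σ ∈ ω₁⁺(ab)`. -/
def PropertyD {A : Type*} (X : Set (ℤ → A)) : Prop :=
  ∀ (b : List A) (σ : A), b ≠ [] → Admissible X (b ++ [σ]) →
    ∃ a : List A, a ≠ [] ∧ Admissible X (a ++ b) ∧ σ ∈ omega1 X (a ++ b)

lemma lastWord_mono_endsAtZero {A : Type*} (x : ℤ → A) (u : ℕ → A) {n m : ℕ} (hnm : n ≤ m)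
    (H : EndsAtZero x (lastWord u m)) : EndsAtZero x (lastWord u n) := by
  intro j
  have hjn : (j : ℕ) < n + 1 := by simpa [lastWord] using j.isLt
  have hj' : (j : ℕ) + (m - n) < m + 1 := by omega
  have := H ⟨(j : ℕ) + (m - n), by simpa [lastWord] using hj'⟩
  simp only [lastWord, List.length_ofFn, List.get_ofFn] at this ⊢
  have e1 : ((((j : ℕ) + (m - n) : ℕ) : ℤ)) - ((m + 1 : ℕ) : ℤ) + 1
      = ((j : ℕ) : ℤ) - (((n + 1 : ℕ) : ℤ)) + 1 := by
    push_cast; omega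
  have e2 : m - ((j : ℕ) + (m - n)) = n - (j : ℕ) := by omega
  convert this using 2 <;> first
    | (push_cast; omega)
    | (simp [Fin.cast]; change (lastWord u n).get j = _; rw [List.get_eq_getElem]; simp only [lastWord, List.getElem_ofFn, e2])

lemma omega1_lastWord_mono {A : Type*} (X : Set (ℤ → A)) (u : ℕ → A) {n m : ℕ} (hnm : n ≤ m) :
    omega1 X (lastWord u n) ⊆ omega1 X (lastWord u m) := by
  intro σ hσ x hx hE
  exact hσ x hx (lastWord_mono_endsAtZero x u hnm hE)

/-- from the proof of Corollary 2.2.  If `Γ₁⁺(x⁻) = Δ₁⁺(x⁻)` for every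
`x⁻ ∈ X⁻`, then there is an `N` with `Γ₁⁺(x⁻) ⊆ ω₁⁺((x_{-N},…,x_0))` for all `x⁻ ∈ X⁻`. -/
theorem stmt14 {A : Type*} [Fintype A] [Nonempty A] [TopologicalSpace A] [DiscreteTopology A]
    (X : Set (ℤ → A)) (hX : IsSubshift X)
    (h : ∀ u ∈ Xminus X, Gamma1 X u = Delta1 X u) :
    ∃ N : ℕ, ∀ u ∈ Xminus X, Gamma1 X u ⊆ omega1 X (lastWord u N) := by
  classical
  obtain ⟨hne, hcl, hshift⟩ := hX
  set F : (ℤ → A) → (ℕ → A) × A := fun x => (fun n : ℕ => x (-(n : ℤ)), x 1) with hF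
  have hFcont : Continuous F := by
    refine Continuous.prodMk (continuous_pi fun n => continuous_apply _) (continuous_apply 1)
  have hK : IsCompact (F '' X) := (hcl.isCompact).image hFcont
  set U : ℕ → Set ((ℕ → A) × A) :=
    fun n => {p : (ℕ → A) × A | p.2 ∈ omega1 X (lastWord p.1 n)} with hU
  have hopen : ∀ n, IsOpen (U n) := by
    intro n
    have heq : U n =
        (fun p : (ℕ → A) × A => ((fun j : Fin (n + 1) => p.1 ((n : ℕ) - (j : ℕ))), p.2)) ⁻¹'
          {q : (Fin (n + 1) → A) × A | q.2 ∈ omega1 X (List.ofFn q.1)} := by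
      ext p; simp [hU, lastWord]
    rw [heq]
    exact (isOpen_discrete _).preimage
      (Continuous.prodMk (continuous_pi fun j => (continuous_apply _).comp continuous_fst)
        continuous_snd)
  have hcover : F '' X ⊆ ⋃ n : ℕ, U n := by
    rintro p ⟨x, hx, rfl⟩
    have hu : (fun n : ℕ => x (-(n : ℤ))) ∈ Xminus X := ⟨x, hx, fun n => rfl⟩
    have hσ : x 1 ∈ Gamma1 X (fun n : ℕ => x (-(n : ℤ))) := ⟨x, hx, fun n => rfl, rfl⟩
    rw [h _ hu] at hσ
    simp only [Delta1, mem_iUnion] at hσ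
    obtain ⟨n, hn⟩ := hσ
    exact mem_iUnion.2 ⟨n, hn⟩
  obtain ⟨s, hs⟩ := hK.elim_finite_subcover U hopen hcover
  refine ⟨s.sup id, ?_⟩
  intro u hu σ hσ
  obtain ⟨x, hx, hxu, hx1⟩ := hσ
  have hmemK : (u, σ) ∈ F '' X := by
    refine ⟨x, hx, ?_⟩
    simp only [hF, Prod.mk.injEq]
    exact ⟨funext fun n => hxu n, hx1⟩
  have := hs hmemK
  simp only [mem_iUnion] at this
  obtain ⟨n, hns, hn⟩ := this
  exact omega1_lastWord_mono X u (Finset.le_sup (f := id) hns) hn
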